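/- The group automorphism α of ℤ^n = ℤ ⊕ ℤ^r defined by e ↦ e and x_j ↦ x_j − e (j = 1,…,r) restricts for each i ∈ ℤ₊ to a monoid isomorphism α_i : M_i → M_{i+1}, and the induced monoid isomorphisms 1 + α_i : ℤ₊e + M_i → ℤ₊e + M_{i+1} (acting as identity on the ℤ₊e-summand and as α_i on M_i) commute with the inclusions ℤ₊e + M_i ⊆ ℤ₊e + M_{i+1}, i.e., (1 + α_{i+1}) ∘ incl = incl ∘ (1 + α_i). -/

import Mathlib

open scoped NNReal
noncomputable section

/-- Real image of an integer vector. -/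
def toR {r : ℕ} (v : Fin r → ℤ) : Fin r → ℝ := fun i => (v i : ℝ)

/-- The group of differences of a submonoid of an abelian group. -/
def gp {G : Type*} [AddCommGroup G] (M : AddSubmonoid G) : AddSubgroup G :=
  AddSubgroup.closure (M : Set G)

/-- `M` is normal: `c • x ∈ M` for `x ∈ gp M`, `c ≥ 1` implies `x ∈ M`. -/
def IsNormalMonoid {G : Type*} [AddCommGroup G] (M : AddSubmonoid G) : Prop :=
  ∀ (c : ℕ) (x : G), 0 < c → x ∈ gp M → (c : ℤ) • x ∈ M → x ∈ M

/-- `M` is positive: no nontrivial units. -/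
def IsPositiveMonoid {G : Type*} [AddCommGroup G] (M : AddSubmonoid G) : Prop :=
  ∀ x ∈ M, -x ∈ M → x = 0

/-- The cone `ℝ₊M ⊆ ℝ^r` spanned by a submonoid `M ⊆ ℤ^r`. -/
def coneM {r : ℕ} (M : AddSubmonoid (Fin r → ℤ)) : Set (Fin r → ℝ) :=
  (Submodule.span ℝ≥0 (toR '' (M : Set (Fin r → ℤ))) : Submodule ℝ≥0 (Fin r → ℝ))

/-- The distinguished vector `e = (1,0) ∈ ℤ ⊕ ℤ^r`. -/
def eVec (r : ℕ) : ℤ × (Fin r → ℤ) := (1, 0)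

/-- `M_i = (ℝ ⊕ ℝ₊M) ∩ (ℤ(x₁ - ie) + ⋯ + ℤ(x_r - ie))`, with `x_j - ie = (-i, x_j)`. -/
def Mi {r : ℕ} (M : AddSubmonoid (Fin r → ℤ)) (x : Fin r → (Fin r → ℤ)) (i : ℕ) :
    Set (ℤ × (Fin r → ℤ)) :=
  {p | p ∈ AddSubgroup.closure (Set.range fun j => ((-(i : ℤ), x j) : ℤ × (Fin r → ℤ))) ∧
       toR p.2 ∈ coneM M}

/-- The submonoid (as a set) `ℤ₊e + M_i`. -/
def ZeMi {r : ℕ} (M : AddSubmonoid (Fin r → ℤ)) (x : Fin r → (Fin r → ℤ)) (i : ℕ) :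
    Set (ℤ × (Fin r → ℤ)) :=
  {p | ∃ (z : ℕ) (m : ℤ × (Fin r → ℤ)), m ∈ Mi M x i ∧ p = (z : ℤ) • eVec r + m}

section Aux

variable {r : ℕ}

def cmap (b : Module.Basis (Fin r) ℤ (Fin r → ℤ)) : (Fin r → ℤ) →ₗ[ℤ] ℤ where
  toFun v := ∑ j, b.repr v j
  map_add' u v := by simp [Finset.sum_add_distrib]
  map_smul' n v := by
    simp only [RingHom.id_apply, smul_eq_mul]
    rw [show (b.repr (n • v)) = n • b.repr v from map_smul _ _ _]
    simp [Finset.mul_sum]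

lemma cmap_basis (b : Module.Basis (Fin r) ℤ (Fin r → ℤ)) (j : Fin r) : cmap b (b j) = 1 := by
  simp [cmap, Finsupp.single_apply]

def kmap (b : Module.Basis (Fin r) ℤ (Fin r → ℤ)) (i : ℕ) : (ℤ × (Fin r → ℤ)) →+ ℤ where
  toFun p := p.1 + (i : ℤ) * cmap b p.2
  map_zero' := by simp
  map_add' p q := by simp [Prod.fst_add, Prod.snd_add, map_add]; ring

lemma mem_closure_iff'' (b : Module.Basis (Fin r) ℤ (Fin r → ℤ)) (i : ℕ) (p : ℤ × (Fin r → ℤ)) :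
    p ∈ AddSubgroup.closure (Set.range fun j => ((-(i : ℤ), b j) : ℤ × (Fin r → ℤ))) ↔
      p.1 + (i : ℤ) * cmap b p.2 = 0 := by
  constructor
  · intro hp
    have hle : AddSubgroup.closure (Set.range fun j => ((-(i : ℤ), b j) : ℤ × (Fin r → ℤ))) ≤
        (kmap b i).ker := by
      rw [AddSubgroup.closure_le]
      rintro q ⟨j, rfl⟩
      simp [AddMonoidHom.mem_ker, kmap, cmap_basis]
    exact hle hp
  · intro hp
    have hrepr : p = ∑ j, (b.repr p.2 j) • ((-(i : ℤ), b j) : ℤ × (Fin r → ℤ)) := by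
      refine Prod.ext ?_ ?_
      · rw [Prod.fst_sum]
        simp only [Prod.smul_fst, smul_eq_mul]
        rw [← Finset.sum_mul]
        have : (∑ j, b.repr p.2 j) = cmap b p.2 := rfl
        rw [this]; linarith
      · rw [Prod.snd_sum]
        simp only [Prod.smul_snd]
        exact (b.sum_repr p.2).symm ▸ rfl
    rw [hrepr]
    exact AddSubgroup.sum_mem _ fun j _ =>
      AddSubgroup.zsmul_mem _ (AddSubgroup.subset_closure (Set.mem_range_self j)) _

lemma alpha_apply'' (b : Module.Basis (Fin r) ℤ (Fin r → ℤ))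
    (α : (ℤ × (Fin r → ℤ)) ≃+ (ℤ × (Fin r → ℤ)))
    (hαe : α (eVec r) = eVec r)
    (hαx : ∀ j : Fin r, α ((0 : ℤ), b j) = ((0 : ℤ), b j) - eVec r)
    (p : ℤ × (Fin r → ℤ)) : α p = (p.1 - cmap b p.2, p.2) := by
  have hdecomp : p = p.1 • eVec r + ∑ j, (b.repr p.2 j) • ((0 : ℤ), b j) := by
    refine Prod.ext ?_ ?_
    · simp [eVec, Prod.fst_sum]
    · simp only [Prod.snd_add, Prod.smul_snd, Prod.snd_sum, eVec, smul_zero]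
      rw [zero_add]
      exact (b.sum_repr p.2).symm
  conv_lhs => rw [hdecomp]
  rw [map_add, map_zsmul, hαe, map_sum]
  simp only [map_zsmul, hαx]
  refine Prod.ext ?_ ?_
  · simp only [Prod.fst_add, Prod.smul_fst, Prod.fst_sub, Prod.fst_sum, eVec,
      smul_eq_mul, mul_one, zero_sub, mul_neg, smul_zero]
    rw [Finset.sum_neg_distrib]
    have : (∑ j, b.repr p.2 j) = cmap b p.2 := rfl
    rw [this]; ring
  · simp only [Prod.snd_add, Prod.smul_snd, Prod.snd_sub, Prod.snd_sum, eVec,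
      smul_zero, sub_zero]
    rw [zero_add]
    exact b.sum_repr p.2

def phiR (b : Module.Basis (Fin r) ℤ (Fin r → ℤ)) : (Fin r → ℝ) →ₗ[ℝ] ℝ where
  toFun w := ∑ k, (cmap b (Pi.single k 1) : ℝ) * w k
  map_add' u v := by simp [mul_add, Finset.sum_add_distrib]
  map_smul' c v := by
    simp only [RingHom.id_apply, smul_eq_mul, Pi.smul_apply, Finset.mul_sum]
    exact Finset.sum_congr rfl fun k _ => by ring

lemma phiR_toR (b : Module.Basis (Fin r) ℤ (Fin r → ℤ)) (v : Fin r → ℤ) :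
    phiR b (toR v) = (cmap b v : ℝ) := by
  have hv : v = ∑ k, (v k) • (Pi.single k 1 : Fin r → ℤ) := by
    rw [show (∑ k, (v k) • (Pi.single k 1 : Fin r → ℤ)) = ∑ k, Pi.single k (v k) from
      Finset.sum_congr rfl fun k _ => by rw [← Pi.single_smul, smul_eq_mul, mul_one]]
    exact (Finset.univ_sum_single v).symm
  have hc : (cmap b v : ℝ) = ∑ k, (v k : ℝ) * (cmap b (Pi.single k 1) : ℝ) := by
    conv_lhs => rw [hv]
    rw [map_sum]
    push_cast
    exact Finset.sum_congr rfl fun k _ => by rw [map_smul, smul_eq_mul]; push_cast; ring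
  rw [hc]
  show (∑ k, (cmap b (Pi.single k 1) : ℝ) * (toR v) k) = _
  exact Finset.sum_congr rfl fun k _ => by simp only [toR]; ring

lemma cmap_nonneg (M : AddSubmonoid (Fin r → ℤ)) (b : Module.Basis (Fin r) ℤ (Fin r → ℤ))
    (hcone : coneM M ⊆ (Submodule.span ℝ≥0 (Set.range fun j => toR (b j)) : Set (Fin r → ℝ)))
    {v : Fin r → ℤ} (hv : toR v ∈ coneM M) : 0 ≤ cmap b v := by
  have h := hcone hv
  rw [SetLike.mem_coe, Submodule.mem_span_range_iff_exists_fun] at h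
  obtain ⟨lam, hl⟩ := h
  have h2 := congrArg (phiR b) hl
  rw [map_sum] at h2
  simp only [NNReal.smul_def, map_smul, smul_eq_mul, phiR_toR, cmap_basis, Int.cast_one,
    mul_one] at h2
  have h3 : (0:ℝ) ≤ (cmap b v : ℝ) := by rw [← h2]; positivity
  exact_mod_cast h3

end Aux

/-- the automorphism α of ℤ ⊕ ℤ^r with α(e) = e, α(x_j) = x_j - e restricts
to monoid isomorphisms α_i : M_i → M_{i+1}; the induced isomorphisms
1 + α_i : ℤ₊e + M_i → ℤ₊e + M_{i+1} (identity on ℤ₊e, α_i on M_i) commute with the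
inclusions ℤ₊e + M_i ⊆ ℤ₊e + M_{i+1}. -/
theorem statement6 {r : ℕ} (M : AddSubmonoid (Fin r → ℤ))
    (hFG : M.FG) (hpos : IsPositiveMonoid M) (hnorm : IsNormalMonoid M) (hgp : gp M = ⊤)
    (x : Fin r → (Fin r → ℤ)) (hx : ∃ b : Module.Basis (Fin r) ℤ (Fin r → ℤ), x = ⇑b)
    (hcone : coneM M ⊆
      (Submodule.span ℝ≥0 (Set.range fun j => toR (x j)) : Set (Fin r → ℝ)))
    (α : (ℤ × (Fin r → ℤ)) ≃+ (ℤ × (Fin r → ℤ)))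
    (hαe : α (eVec r) = eVec r)
    (hαx : ∀ j : Fin r, α ((0 : ℤ), x j) = ((0 : ℤ), x j) - eVec r) :
    ∀ i : ℕ,
      Set.BijOn α (Mi M x i) (Mi M x (i + 1)) ∧
      Set.BijOn α (ZeMi M x i) (ZeMi M x (i + 1)) ∧
      -- `α` restricted to `ℤ₊e + M_i` is `1 + α_i` (identity on `ℤ₊e`, `α_i` on `M_i`):
      (∀ (z : ℕ) (m : ℤ × (Fin r → ℤ)), m ∈ Mi M x i →
        α ((z : ℤ) • eVec r + m) = (z : ℤ) • eVec r + α m) ∧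
      -- and the square `(1 + α_{i+1}) ∘ incl = incl ∘ (1 + α_i)` commutes:
      (ZeMi M x i ⊆ ZeMi M x (i + 1)) ∧
      (∀ p ∈ ZeMi M x i, α p ∈ ZeMi M x (i + 2)) := by
  obtain ⟨b, rfl⟩ := hx
  have hMi : ∀ (i : ℕ) (p : ℤ × (Fin r → ℤ)), p ∈ Mi M (⇑b) i ↔
      (p.1 + (i : ℤ) * cmap b p.2 = 0 ∧ toR p.2 ∈ coneM M) := by
    intro i p
    unfold Mi
    rw [Set.mem_setOf_eq, mem_closure_iff'' b i p]
  have hα : ∀ p, α p = (p.1 - cmap b p.2, p.2) := alpha_apply'' b α hαe hαx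
  have hmapsMi : ∀ i, ∀ p ∈ Mi M (⇑b) i, α p ∈ Mi M (⇑b) (i + 1) := by
    intro i p hp
    rw [hMi] at hp ⊢
    rw [hα]
    refine ⟨?_, hp.2⟩
    have h1 := hp.1
    dsimp only
    push_cast
    linarith
  have hsurjMi : ∀ i, ∀ q ∈ Mi M (⇑b) (i + 1), ∃ p ∈ Mi M (⇑b) i, α p = q := by
    intro i q hq
    rw [hMi] at hq
    refine ⟨(q.1 + cmap b q.2, q.2), ?_, ?_⟩
    · rw [hMi]
      refine ⟨?_, hq.2⟩
      have h1 := hq.1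
      dsimp only
      push_cast at h1 ⊢
      linarith
    · rw [hα]
      dsimp only
      refine Prod.ext ?_ rfl
      dsimp only
      ring
  have hbijMi : ∀ i, Set.BijOn α (Mi M (⇑b) i) (Mi M (⇑b) (i + 1)) := by
    intro i
    refine ⟨hmapsMi i, α.injective.injOn, ?_⟩
    intro q hq
    obtain ⟨p, hp, he⟩ := hsurjMi i q hq
    exact ⟨p, hp, he⟩
  have hcomm : ∀ (z : ℕ) (m : ℤ × (Fin r → ℤ)),
      α ((z : ℤ) • eVec r + m) = (z : ℤ) • eVec r + α m := by
    intro z m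
    rw [map_add, map_zsmul, hαe]
  have hbijZ : ∀ i, Set.BijOn α (ZeMi M (⇑b) i) (ZeMi M (⇑b) (i + 1)) := by
    intro i
    refine ⟨?_, α.injective.injOn, ?_⟩
    · rintro p ⟨z, m, hm, rfl⟩
      exact ⟨z, α m, hmapsMi i m hm, hcomm z m⟩
    · rintro q ⟨z, m, hm, rfl⟩
      obtain ⟨p, hp, he⟩ := hsurjMi i m hm
      exact ⟨(z : ℤ) • eVec r + p, ⟨z, p, hp, rfl⟩, by rw [hcomm, he]⟩
  have hincl : ∀ i, ZeMi M (⇑b) i ⊆ ZeMi M (⇑b) (i + 1) := by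
    rintro i p ⟨z, m, hm, rfl⟩
    rw [hMi] at hm
    have hc : 0 ≤ cmap b m.2 := cmap_nonneg M b hcone hm.2
    refine ⟨z + (cmap b m.2).toNat, (m.1 - cmap b m.2, m.2), ?_, ?_⟩
    · rw [hMi]
      refine ⟨?_, hm.2⟩
      have h1 := hm.1
      dsimp only
      push_cast
      linarith
    · have hzc : ((z + (cmap b m.2).toNat : ℕ) : ℤ) = (z : ℤ) + cmap b m.2 := by
        push_cast [Int.toNat_of_nonneg hc]
        ring
      rw [hzc]
      refine Prod.ext ?_ ?_
      · simp only [Prod.fst_add, Prod.smul_fst, eVec, smul_eq_mul, mul_one]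
        ring
      · simp only [Prod.snd_add, Prod.smul_snd, eVec, smul_zero]
  intro i
  refine ⟨hbijMi i, hbijZ i, fun z m _ => hcomm z m, hincl i, ?_⟩
  intro p hp
  exact hincl (i + 1) ((hbijZ i).mapsTo hp)
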